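/- Λ is differentiable at every x with sin x ≠ 0, with derivative Λ'(x) = -ln|2 sin x|. -/

import Mathlib

open Real MeasureTheory intervalIntegral

/-- The Lobachevsky function. -/
noncomputable def lob (x : ℝ) : ℝ := -∫ t in (0:ℝ)..x, Real.log |2 * Real.sin t|

private lemma abs_log_le_add {t : ℝ} (ht : 0 < t) :
    |Real.log t| ≤ t + 2 * t ^ (-(1:ℝ)/2) := by
  have h2 : (0:ℝ) < t ^ (-(1:ℝ)/2) := Real.rpow_pos_of_pos ht _
  have hu : Real.log (t ^ (-(1:ℝ)/2)) = (-(1:ℝ)/2) * Real.log t := Real.log_rpow ht _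
  have h3 : Real.log (t ^ (-(1:ℝ)/2)) ≤ t ^ (-(1:ℝ)/2) - 1 := Real.log_le_sub_one_of_pos h2
  have h4 : Real.log t ≤ t - 1 := Real.log_le_sub_one_of_pos ht
  rw [hu] at h3
  rw [abs_le]
  constructor <;> nlinarith

private lemma abs_sin_le_abs (t : ℝ) : |Real.sin t| ≤ |t| := by
  rw [← Real.sqrt_sq_eq_abs (Real.sin t), ← Real.sqrt_sq_eq_abs t]
  exact Real.sqrt_le_sqrt Real.sin_sq_le_sq

/-- `|t| ^ r` is interval integrable near 0 for `r > -1`. -/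
private lemma intInt_abs_rpow (b : ℝ) :
    IntervalIntegrable (fun t : ℝ => |t| ^ (-(1:ℝ)/2)) volume (-b) b := by
  have hpos : ∀ c : ℝ, IntervalIntegrable (fun t : ℝ => |t| ^ (-(1:ℝ)/2)) volume 0 c := by
    intro c
    rcases le_or_gt c 0 with hc | hc
    · -- interval [c, 0] with c ≤ 0; use comp_neg
      have h1 : IntervalIntegrable (fun t : ℝ => t ^ (-(1:ℝ)/2)) volume 0 (-c) :=
        intervalIntegral.intervalIntegrable_rpow' (by norm_num)
      have h2 : IntervalIntegrable (fun t : ℝ => |t| ^ (-(1:ℝ)/2)) volume 0 (-c) := by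
        apply h1.congr_ae
        have : Set.uIoc (0:ℝ) (-c) ⊆ Set.Ioi 0 := by
          rw [Set.uIoc_of_le (by linarith)]
          intro x hx; exact hx.1
        filter_upwards [MeasureTheory.ae_restrict_mem measurableSet_uIoc] with x hx
        rw [abs_of_pos (this hx)]
      have h3 := (IntervalIntegrable.iff_comp_neg (by simp)).1 h2
      simp only [abs_neg, neg_zero, neg_neg] at h3
      exact h3
    · have h1 : IntervalIntegrable (fun t : ℝ => t ^ (-(1:ℝ)/2)) volume 0 c :=
        intervalIntegral.intervalIntegrable_rpow' (by norm_num)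
      apply h1.congr_ae
      have : Set.uIoc (0:ℝ) c ⊆ Set.Ioi 0 := by
        rw [Set.uIoc_of_le hc.le]
        intro x hx; exact hx.1
      filter_upwards [MeasureTheory.ae_restrict_mem measurableSet_uIoc] with x hx
      rw [abs_of_pos (this hx)]
  exact ((hpos (-b)).symm).trans (hpos b)

private lemma lobInt_meas : Measurable (fun t : ℝ => Real.log |2 * Real.sin t|) :=
  Real.measurable_log.comp ((Real.measurable_sin.const_mul 2).abs)

/-- Interval integrability on the central interval `[-π/2, π/2]`. -/
private lemma lobInt_central :
    IntervalIntegrable (fun t : ℝ => Real.log |2 * Real.sin t|) volume (-(π/2)) (π/2) := by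
  set g : ℝ → ℝ := fun t => Real.log 2 + π/2 + 2 * (2/π)^(-(1:ℝ)/2) * |t| ^ (-(1:ℝ)/2) with hg
  have hgint : IntervalIntegrable g volume (-(π/2)) (π/2) := by
    apply IntervalIntegrable.add
    · exact intervalIntegrable_const
    · exact (intInt_abs_rpow (π/2)).const_mul _
  apply hgint.mono_fun
  · exact (lobInt_meas.aestronglyMeasurable).restrict
  · have hne : ∀ᵐ t ∂(volume.restrict (Set.uIoc (-(π/2)) (π/2))), t ≠ (0:ℝ) := by
      refine MeasureTheory.ae_restrict_of_ae ?_
      have : volume ({(0:ℝ)} : Set ℝ) = 0 := measure_singleton 0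
      rw [MeasureTheory.ae_iff]
      convert this using 2
      ext x; simp
    have hπ : (0:ℝ) < π := Real.pi_pos
    filter_upwards [MeasureTheory.ae_restrict_mem measurableSet_uIoc, hne] with t htm ht0
    have htmem : t ∈ Set.Ioc (-(π/2)) (π/2) := by
      rwa [Set.uIoc_of_le (by linarith)] at htm
    have habs : |t| ≤ π/2 := abs_le.2 ⟨htmem.1.le, htmem.2⟩
    have habs0 : 0 < |t| := abs_pos.2 ht0
    have hsinlb : 2/π * |t| ≤ |Real.sin t| := Real.mul_abs_le_abs_sin habs
    have hsinpos : 0 < |Real.sin t| := lt_of_lt_of_le (by positivity) hsinlb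
    have hsinub : |Real.sin t| ≤ |t| := abs_sin_le_abs t
    -- log |2 sin t| = log 2 + log |sin t|
    have hsplit : Real.log |2 * Real.sin t| = Real.log 2 + Real.log |Real.sin t| := by
      rw [abs_mul, abs_two, Real.log_mul (by norm_num) hsinpos.ne']
    have hlog2 : (0:ℝ) ≤ Real.log 2 := Real.log_nonneg (by norm_num)
    -- bound |log |sin t||
    have hbound := abs_log_le_add hsinpos
    -- |sin t| ≤ π/2 and |sin t|^(-1/2) ≤ (2/π * |t|)^(-1/2)
    have hs2 : |Real.sin t| ≤ π/2 := hsinub.trans habs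
    have h0 : (0:ℝ) < 2/π * |t| := by positivity
    have hkey : (2/π * |t|) ^ ((1:ℝ)/2) ≤ |Real.sin t| ^ ((1:ℝ)/2) :=
      Real.rpow_le_rpow h0.le hsinlb (by norm_num)
    have hrpow : |Real.sin t| ^ (-(1:ℝ)/2) ≤ (2/π * |t|) ^ (-(1:ℝ)/2) := by
      rw [show (-(1:ℝ)/2) = -((1:ℝ)/2) by norm_num, Real.rpow_neg hsinpos.le,
        Real.rpow_neg h0.le]
      exact inv_anti₀ (Real.rpow_pos_of_pos h0 _) hkey
    have hmul : (2/π * |t|) ^ (-(1:ℝ)/2) = (2/π) ^ (-(1:ℝ)/2) * |t| ^ (-(1:ℝ)/2) :=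
      Real.mul_rpow (by positivity) (abs_nonneg t)
    have hgpos : 0 ≤ g t := by
      have h1 : (0:ℝ) ≤ 2 * (2/π)^(-(1:ℝ)/2) * |t| ^ (-(1:ℝ)/2) := by positivity
      have h2 : (0:ℝ) ≤ π/2 := by positivity
      simp only [hg]
      linarith
    rw [Real.norm_eq_abs, Real.norm_eq_abs, abs_of_nonneg hgpos, hsplit]
    have h5 : 2 * |Real.sin t| ^ (-(1:ℝ)/2) ≤
        2 * ((2/π) ^ (-(1:ℝ)/2) * |t| ^ (-(1:ℝ)/2)) := by
      rw [← hmul]; linarith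
    have h6 := abs_add_le (Real.log 2) (Real.log |Real.sin t|)
    rw [abs_of_nonneg hlog2] at h6
    simp only [hg]
    linarith

private lemma lobInt_periodic :
    Function.Periodic (fun t : ℝ => Real.log |2 * Real.sin t|) π := by
  intro x
  simp only [Real.sin_add_pi, mul_neg, abs_neg]

private lemma lobInt_shift (k : ℤ) :
    IntervalIntegrable (fun t : ℝ => Real.log |2 * Real.sin t|) volume
      ((k:ℝ)*π - π/2) ((k:ℝ)*π + π/2) := by
  have h := lobInt_central.comp_add_right (-((k:ℝ)*π))
  have heq : (fun x : ℝ => Real.log |2 * Real.sin (x + -((k:ℝ)*π))|) =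
      (fun x : ℝ => Real.log |2 * Real.sin x|) := by
    funext x
    have := lobInt_periodic.sub_int_mul_eq (x := x) k
    simpa [sub_eq_add_neg] using this
  rw [heq] at h
  have e1 : (-(π/2) - -((k:ℝ)*π)) = (k:ℝ)*π - π/2 := by ring
  have e2 : (π/2 - -((k:ℝ)*π)) = (k:ℝ)*π + π/2 := by ring
  rwa [e1, e2] at h

private lemma lobInt_global (a b : ℝ) :
    IntervalIntegrable (fun t : ℝ => Real.log |2 * Real.sin t|) volume a b := by
  have hπ : (0:ℝ) < π := Real.pi_pos
  have key : ∀ n : ℕ, IntervalIntegrable (fun t : ℝ => Real.log |2 * Real.sin t|) volume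
      (-((n:ℝ)*π) - π/2) ((n:ℝ)*π + π/2) := by
    intro n
    induction n with
    | zero => simpa using lobInt_central
    | succ n ih =>
      have h1 := lobInt_shift (-(n:ℤ)-1)
      have h2 := lobInt_shift ((n:ℤ)+1)
      have e1 : ((-(n:ℤ)-1 : ℤ):ℝ)*π - π/2 = -(((n:ℕ)+1:ℝ)*π) - π/2 := by push_cast; ring
      have e2 : ((-(n:ℤ)-1 : ℤ):ℝ)*π + π/2 = -(((n:ℕ):ℝ)*π) - π/2 := by push_cast; ring
      have e3 : (((n:ℤ)+1 : ℤ):ℝ)*π - π/2 = ((n:ℕ):ℝ)*π + π/2 := by push_cast; ring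
      have e4 : (((n:ℤ)+1 : ℤ):ℝ)*π + π/2 = (((n:ℕ)+1:ℝ))*π + π/2 := by push_cast; ring
      rw [e1, e2] at h1
      rw [e3, e4] at h2
      have := (h1.trans ih).trans h2
      convert this using 2 <;> push_cast <;> ring
  obtain ⟨n, hn'⟩ := exists_nat_ge (max |a| |b|)
  refine (key n).mono_set ?_
  have hπ3 : (3:ℝ) < π := Real.pi_gt_three
  have hnn : (0:ℝ) ≤ (n:ℝ) := Nat.cast_nonneg n
  have hnp : (n:ℝ) ≤ (n:ℝ)*π := by nlinarith
  have hlo : -((n:ℝ)*π) - π/2 ≤ ((n:ℝ)*π) + π/2 := by nlinarith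
  have mem : ∀ x : ℝ, |x| ≤ max |a| |b| →
      x ∈ Set.uIcc (-((n:ℝ)*π) - π/2) ((n:ℝ)*π + π/2) := by
    intro x hx
    have hxn : |x| ≤ (n:ℝ)*π := le_trans (hx.trans hn') hnp
    rw [Set.uIcc_of_le hlo]
    exact ⟨by linarith [neg_abs_le x], by linarith [le_abs_self x]⟩
  rw [Set.uIcc_subset_uIcc_iff_mem]
  exact ⟨mem a (le_max_left _ _), mem b (le_max_right _ _)⟩

theorem lob_hasDerivAt :
    ∀ x : ℝ, Real.sin x ≠ 0 → HasDerivAt lob (-Real.log |2 * Real.sin x|) x := by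
  intro x hx
  have hint := lobInt_global 0 x
  have hmeas : StronglyMeasurableAtFilter
      (fun t : ℝ => Real.log |2 * Real.sin t|) (nhds x) volume :=
    ⟨Set.univ, Filter.univ_mem, lobInt_meas.aestronglyMeasurable.restrict⟩
  have h0 : |2 * Real.sin x| ≠ 0 := by
    simp [abs_ne_zero, hx]
  have hin : ContinuousAt (fun t : ℝ => |2 * Real.sin t|) x :=
    ((continuous_const.mul Real.continuous_sin).abs).continuousAt
  have hcont : ContinuousAt (fun t : ℝ => Real.log |2 * Real.sin t|) x :=
    hin.log h0
  have h := intervalIntegral.integral_hasDerivAt_right hint hmeas hcont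
  exact h.neg
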